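/- Performance difference lemma: for a finite MDP with discount γ ∈ [0,1), reward r, two policies π and π', value functions V^π, V^{π'}, Q-function Q^{π'}, and advantage A^{π'}(s,a) := Q^{π'}(s,a) − V^{π'}(s), it holds that V^{π'}(s₀) − V^π(s₀) = −(1/(1−γ)) · E_{s ∼ μ^π_{s₀}, a ∼ π(·|s)}[A^{π'}(s,a)], where μ^π_{s₀}(s) = (1−γ)∑_{t≥0} γ^t Pr[s_t = s | s₀, π] is the normalized discounted state occupancy of π started at s₀. -/

import Mathlib

/-- Performance difference lemma, stated via Bellman fixed-point characterizations
of the value functions and the discounted occupancy measure. -/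
theorem stmt_11 {S A : Type*} [Fintype S] [Nonempty S] [Fintype A] [Nonempty A]
    [DecidableEq S]
    (γ : ℝ) (hγ0 : 0 ≤ γ) (hγ1 : γ < 1)
    (P : S → A → S → ℝ) (hP0 : ∀ s a s', 0 ≤ P s a s') (hP1 : ∀ s a, ∑ s', P s a s' = 1)
    (r : S → A → ℝ)
    (π π' : S → A → ℝ)
    (hπ0 : ∀ s a, 0 ≤ π s a) (hπ1 : ∀ s, ∑ a, π s a = 1)
    (hπ'0 : ∀ s a, 0 ≤ π' s a) (hπ'1 : ∀ s, ∑ a, π' s a = 1)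
    (V V' : S → ℝ)
    (hV : ∀ s, V s = ∑ a, π s a * (r s a + γ * ∑ s', P s a s' * V s'))
    (hV' : ∀ s, V' s = ∑ a, π' s a * (r s a + γ * ∑ s', P s a s' * V' s'))
    (Q' : S → A → ℝ) (hQ' : ∀ s a, Q' s a = r s a + γ * ∑ s', P s a s' * V' s')
    (Adv : S → A → ℝ) (hA : ∀ s a, Adv s a = Q' s a - V' s)
    (s₀ : S)
    (d : ℕ → S → ℝ)
    (hd0 : ∀ s, d 0 s = if s = s₀ then 1 else 0)
    (hdsucc : ∀ t s', d (t + 1) s' = ∑ s, ∑ a, d t s * π s a * P s a s')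
    (μ : S → ℝ) (hμ : ∀ s, μ s = (1 - γ) * ∑' t : ℕ, γ ^ t * d t s) :
    V' s₀ - V s₀ = -(1 / (1 - γ)) * ∑ s, ∑ a, μ s * π s a * Adv s a := by
  have hγne : (1 : ℝ) - γ ≠ 0 := by linarith
  set f : S → ℝ := fun s => V' s - V s with hf
  set g : S → ℝ := fun s => ∑ a, π s a * Adv s a with hg
  set q : S → S → ℝ := fun s s' => ∑ a, π s a * P s a s' with hq
  -- key Bellman-style recursion for f
  have key : ∀ s, f s = γ * (∑ s', q s s' * f s') - g s := by
    intro s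
    have e1 : g s = (∑ a, π s a * (r s a + γ * ∑ s', P s a s' * V' s')) - V' s := by
      simp only [hg, hA, hQ', mul_sub, Finset.sum_sub_distrib, ← Finset.sum_mul, hπ1, one_mul]
    have e2 : γ * (∑ s', q s s' * f s') =
        (∑ a, π s a * (γ * ∑ s', P s a s' * V' s')) -
        (∑ a, π s a * (γ * ∑ s', P s a s' * V s')) := by
      simp only [hq, hf, Finset.sum_mul, Finset.mul_sum]
      rw [Finset.sum_comm]
      rw [← Finset.sum_sub_distrib]
      refine Finset.sum_congr rfl fun a _ => ?_
      rw [← Finset.sum_sub_distrib]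
      refine Finset.sum_congr rfl fun s' _ => ?_
      ring
    rw [e2, e1]
    have e3 : V s = ∑ a, π s a * (r s a + γ * ∑ s', P s a s' * V s') := hV s
    simp only [hf]
    simp only [mul_add, Finset.sum_add_distrib] at e3 ⊢
    linarith [e3]
  -- occupancy properties
  have hd_nonneg : ∀ t s, 0 ≤ d t s := by
    intro t
    induction t with
    | zero => intro s; rw [hd0]; split <;> norm_num
    | succ t ih =>
      intro s'
      rw [hdsucc]
      exact Finset.sum_nonneg fun s _ => Finset.sum_nonneg fun a _ =>
        mul_nonneg (mul_nonneg (ih s) (hπ0 s a)) (hP0 s a s')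
  have hd_sum : ∀ t, ∑ s, d t s = 1 := by
    intro t
    induction t with
    | zero => simp [hd0]
    | succ t ih =>
      have : ∑ s', d (t+1) s' = ∑ s, ∑ a, d t s * π s a * (∑ s', P s a s') := by
        simp only [hdsucc, Finset.mul_sum]
        rw [Finset.sum_comm]
        refine Finset.sum_congr rfl fun s _ => ?_
        rw [Finset.sum_comm]
      rw [this]
      simp only [hP1, mul_one, ← Finset.mul_sum, hπ1]
      simpa using ih
  have hd_le_one : ∀ t s, d t s ≤ 1 := by
    intro t s
    calc d t s ≤ ∑ s', d t s' :=
      Finset.single_le_sum (fun s' _ => hd_nonneg t s') (Finset.mem_univ s)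
    _ = 1 := hd_sum t
  set c : ℕ → ℝ := fun t => ∑ s, d t s * g s with hc
  -- partial sum identity
  have hstep : ∀ T : ℕ, f s₀ =
      -(∑ t ∈ Finset.range T, γ ^ t * c t) + γ ^ T * ∑ s, d T s * f s := by
    intro T
    induction T with
    | zero =>
      simp only [Finset.range_zero, Finset.sum_empty, neg_zero, pow_zero, one_mul, zero_add]
      simp [hd0, ite_mul, one_mul, zero_mul]
    | succ T ih =>
      have e4 : ∑ s, d T s * f s = γ * (∑ s', d (T+1) s' * f s') - c T := by
        have : ∀ s, d T s * f s = γ * (∑ s', d T s * (q s s' * f s')) - d T s * g s := by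
          intro s
          rw [key s]
          rw [Finset.mul_sum, Finset.mul_sum]
          rw [mul_sub]
          congr 1
          rw [Finset.mul_sum]
          refine Finset.sum_congr rfl fun s' _ => ?_
          ring
        rw [Finset.sum_congr rfl fun s _ => this s]
        rw [Finset.sum_sub_distrib]
        congr 1
        · rw [← Finset.mul_sum]
          congr 1
          rw [Finset.sum_comm]
          refine Finset.sum_congr rfl fun s' _ => ?_
          rw [hdsucc, Finset.sum_mul]
          refine Finset.sum_congr rfl fun s _ => ?_
          simp only [hq, Finset.sum_mul, Finset.mul_sum]
          refine Finset.sum_congr rfl fun a _ => ?_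
          ring
      rw [ih, e4, Finset.sum_range_succ]
      ring
  -- summability
  have hsum_ds : ∀ s, Summable (fun t => γ ^ t * d t s) := by
    intro s
    have hb : ∀ t : ℕ, γ ^ t * d t s ≤ γ ^ t := by
      intro t
      calc γ ^ t * d t s ≤ γ ^ t * 1 :=
            mul_le_mul_of_nonneg_left (hd_le_one t s) (pow_nonneg hγ0 t)
        _ = γ ^ t := mul_one _
    exact Summable.of_nonneg_of_le
      (fun t => mul_nonneg (pow_nonneg hγ0 t) (hd_nonneg t s)) hb
      (summable_geometric_of_lt_one hγ0 hγ1)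
  set M : ℝ := ∑ s, |g s| with hM
  have habs_c : ∀ t, |c t| ≤ M := by
    intro t
    calc |c t| ≤ ∑ s, |d t s * g s| := Finset.abs_sum_le_sum_abs _ _
      _ ≤ ∑ s, |g s| := by
          refine Finset.sum_le_sum fun s _ => ?_
          rw [abs_mul, abs_of_nonneg (hd_nonneg t s)]
          calc d t s * |g s| ≤ 1 * |g s| :=
              mul_le_mul_of_nonneg_right (hd_le_one t s) (abs_nonneg _)
            _ = |g s| := one_mul _
  have hsum_c : Summable (fun t => γ ^ t * c t) := by
    apply Summable.of_norm_bounded (g := fun t => M * γ ^ t)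
      (((summable_geometric_of_lt_one hγ0 hγ1)).mul_left M)
    intro t
    rw [Real.norm_eq_abs, abs_mul, abs_of_nonneg (pow_nonneg hγ0 t)]
    calc γ ^ t * |c t| ≤ γ ^ t * M :=
        mul_le_mul_of_nonneg_left (habs_c t) (pow_nonneg hγ0 t)
      _ = M * γ ^ t := mul_comm _ _
  -- limit identification
  have hT0 : Filter.Tendsto (fun T : ℕ => γ ^ T * ∑ s, d T s * f s)
      Filter.atTop (nhds 0) := by
    set M' : ℝ := ∑ s, |f s| with hM'
    have habs_h : ∀ T, ‖γ ^ T * ∑ s, d T s * f s‖ ≤ M' * γ ^ T := by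
      intro T
      rw [Real.norm_eq_abs, abs_mul, abs_of_nonneg (pow_nonneg hγ0 T)]
      have : |∑ s, d T s * f s| ≤ M' := by
        calc |∑ s, d T s * f s| ≤ ∑ s, |d T s * f s| := Finset.abs_sum_le_sum_abs _ _
          _ ≤ ∑ s, |f s| := by
              refine Finset.sum_le_sum fun s _ => ?_
              rw [abs_mul, abs_of_nonneg (hd_nonneg T s)]
              calc d T s * |f s| ≤ 1 * |f s| :=
                  mul_le_mul_of_nonneg_right (hd_le_one T s) (abs_nonneg _)
                _ = |f s| := one_mul _
      calc γ ^ T * |∑ s, d T s * f s| ≤ γ ^ T * M' :=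
          mul_le_mul_of_nonneg_left this (pow_nonneg hγ0 T)
        _ = M' * γ ^ T := mul_comm _ _
    refine squeeze_zero_norm habs_h ?_
    have := tendsto_pow_atTop_nhds_zero_of_lt_one hγ0 hγ1
    simpa using this.const_mul M'
  have hps : Filter.Tendsto (fun T : ℕ => ∑ t ∈ Finset.range T, γ ^ t * c t)
      Filter.atTop (nhds (-f s₀)) := by
    have : (fun T : ℕ => ∑ t ∈ Finset.range T, γ ^ t * c t) =
        fun T => γ ^ T * (∑ s, d T s * f s) - f s₀ := by
      funext T
      have := hstep T
      linarith
    rw [this]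
    simpa using hT0.sub_const (f s₀)
  have htsum : ∑' t : ℕ, γ ^ t * c t = -f s₀ :=
    tendsto_nhds_unique hsum_c.hasSum.tendsto_sum_nat hps
  -- assemble RHS
  have hrhs : ∑ s, ∑ a, μ s * π s a * Adv s a = (1 - γ) * ∑' t : ℕ, γ ^ t * c t := by
    have e5 : ∀ s, ∑ a, μ s * π s a * Adv s a = μ s * g s := by
      intro s
      rw [hg, Finset.mul_sum]
      exact Finset.sum_congr rfl fun a _ => by ring
    rw [Finset.sum_congr rfl fun s _ => e5 s]
    have e6 : ∀ s, μ s * g s = (1 - γ) * ∑' t : ℕ, (γ ^ t * d t s) * g s := by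
      intro s
      rw [hμ s, mul_assoc]
      congr 1
      rw [← tsum_mul_right]
    rw [Finset.sum_congr rfl fun s _ => e6 s, ← Finset.mul_sum]
    congr 1
    rw [← Summable.tsum_finsetSum (fun s _ => (hsum_ds s).mul_right (g s))]
    refine tsum_congr fun t => ?_
    rw [hc, Finset.mul_sum]
    exact Finset.sum_congr rfl fun s _ => by ring
  have : V' s₀ - V s₀ = f s₀ := rfl
  rw [this, hrhs, htsum]
  field_simp
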